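/- Let w be a word over the alphabet {a, ā, b, b̄} (an element of the free monoid M on these four letters). Then the following are equivalent: (1) for every normal subgroup U of finite index in the free group F on the four free generators a, ā, b, b̄, there exists a word w' in the one-sided Dyck language D'₂* such that the images of w and w' in F lie in the same coset of U; (2) w belongs to the two-sided Dyck language D₂*. In other words, the closure of D'₂* in M, in the topology induced from the profinite topology on F, is exactly D₂*. -/

import Mathlib

/-- The four-letter alphabet `{a, ā, b, b̄}`. -/
inductive Letter : Type
  | a | abar | b | bbar
  deriving DecidableEq

/-- The "formal inverse" letter: `a ↦ ā`, `ā ↦ a`, `b ↦ b̄`, `b̄ ↦ b`. -/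
def Letter.bar : Letter → Letter
  | .a => .abar
  | .abar => .a
  | .b => .bbar
  | .bbar => .b

/-- The free monoid `M` on the four letters. -/
abbrev M : Type := FreeMonoid Letter

/-- The free group `F` on the four free generators. -/
abbrev F : Type := FreeGroup Letter

/-- The canonical embedding `M → F`. -/
def emb : M →* F := FreeMonoid.lift (FreeGroup.of : Letter → F)

/-- The one-sided (restricted) Dyck language `D'₂*`: the smallest subset of `M`
containing the empty word, closed under concatenation and under
`w ↦ a·w·ā` and `w ↦ b·w·b̄`. -/
inductive OneDyck : M → Prop
  | empty : OneDyck 1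
  | mul {u v : M} : OneDyck u → OneDyck v → OneDyck (u * v)
  | brA {u : M} : OneDyck u →
      OneDyck (FreeMonoid.of Letter.a * u * FreeMonoid.of Letter.abar)
  | brB {u : M} : OneDyck u →
      OneDyck (FreeMonoid.of Letter.b * u * FreeMonoid.of Letter.bbar)

/-- One reduction step: deletion of an adjacent two-letter factor
`aā`, `āa`, `bb̄` or `b̄b`. -/
inductive PairDeletion : M → M → Prop
  | step (u v : M) (l : Letter) :
      PairDeletion (u * FreeMonoid.of l * FreeMonoid.of l.bar * v) (u * v)

/-- The two-sided (unrestricted) Dyck language `D₂*`: words reducing to the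
empty word by successive deletions of adjacent factors `aā`, `āa`, `bb̄`, `b̄b`. -/
def TwoDyck (w : M) : Prop := Relation.ReflTransGen PairDeletion w 1

/-- The two generators `x, y` of `F₂`. -/
inductive Gen : Type
  | x | y
  deriving DecidableEq

/-- The free group `F₂` on the two free generators `x, y`. -/
abbrev F₂ : Type := FreeGroup Gen

/-- The homomorphism `φ : F → F₂` with `φ(a) = x`, `φ(ā) = x⁻¹`,
`φ(b) = y`, `φ(b̄) = y⁻¹`. -/
def phi : F →* F₂ := FreeGroup.lift fun l => match l with
  | .a => FreeGroup.of Gen.x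
  | .abar => (FreeGroup.of Gen.x)⁻¹
  | .b => FreeGroup.of Gen.y
  | .bbar => (FreeGroup.of Gen.y)⁻¹
set_option linter.unusedSectionVars false

lemma exists_perm_extend {α : Type} [Fintype α] [DecidableEq α] (f : α → Option α)
    (hinj : ∀ m m' t, f m = some t → f m' = some t → m = m') :
    ∃ σ : Equiv.Perm α, ∀ m t, f m = some t → σ m = t := by
  classical
  set p : α → Prop := fun m => (f m).isSome with hp
  set q : α → Prop := fun t => ∃ m, f m = some t with hq
  have hbij : Function.Bijective (fun m : {m // p m} =>
      (⟨(f m.1).get m.2, m.1, (Option.some_get m.2).symm⟩ : {t // q t})) := by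
    constructor
    · rintro ⟨m, hm⟩ ⟨m', hm'⟩ hmm
      have h1 : (f m).get hm = (f m').get hm' := congrArg Subtype.val hmm
      have h2 : f m = some ((f m).get hm) := (Option.some_get hm).symm
      have h3 : f m' = some ((f m).get hm) := by rw [h1]; exact (Option.some_get hm').symm
      exact Subtype.ext (hinj m m' _ h2 h3)
    · rintro ⟨t, m, hm⟩
      have hpm : p m := by simp [hp, hm]
      refine ⟨⟨m, hpm⟩, Subtype.ext ?_⟩
      simp only
      rw [Option.get_of_mem _ hm]
  set e : {m // p m} ≃ {t // q t} := Equiv.ofBijective _ hbij with he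
  have hcard : Fintype.card {m // ¬ p m} = Fintype.card {t // ¬ q t} := by
    rw [Fintype.card_subtype_compl, Fintype.card_subtype_compl, Fintype.card_congr e]
  set ec : {m // ¬ p m} ≃ {t // ¬ q t} := Fintype.equivOfCardEq hcard
  refine ⟨(Equiv.sumCompl p).symm.trans ((e.sumCongr ec).trans (Equiv.sumCompl q)), ?_⟩
  intro m t hmt
  have hpm : p m := by simp [hp, hmt]
  have h1 : (Equiv.sumCompl p).symm m = Sum.inl ⟨m, hpm⟩ :=
    Equiv.sumCompl_symm_apply_of_pos hpm
  simp only [Equiv.trans_apply, h1, Equiv.sumCongr_apply, Sum.map_inl,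
    Equiv.sumCompl_apply_inl]
  show ((f m).get _ : α) = t
  rw [Option.get_of_mem _ hmt]

/-- Residual finiteness of free groups, in the form needed here. -/
lemma freeGroup_sep {β : Type} [DecidableEq β] (g : FreeGroup β) (hg : g ≠ 1) :
    ∃ (n : ℕ) (ψ : FreeGroup β →* Equiv.Perm (Fin (n + 1))), ψ g ≠ 1 := by
  classical
  set L := g.toWord with hLdef
  set k := L.length with hk
  have hk0 : k ≠ 0 := by
    intro h
    apply hg
    exact FreeGroup.toWord_eq_nil_iff.mp (List.length_eq_zero_iff.mp h)
  set R := L.reverse with hR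
  have hRlen : R.length = k := by simp [hR, hk]
  have hLred : FreeGroup.reduce L = L := FreeGroup.reduce_toWord g
  have hnoadjL : ∀ (A B : List (β × Bool)) (z : β) (b : Bool),
      L ≠ A ++ (z, b) :: (z, !b) :: B := by
    intro A B z b hcontra
    exact FreeGroup.reduce.not (p := False) (by rw [hLred]; exact hcontra)
  have hnoadjR : ∀ (A B : List (β × Bool)) (z : β) (b : Bool),
      R ≠ A ++ (z, b) :: (z, !b) :: B := by
    intro A B z b hcontra
    apply hnoadjL B.reverse A.reverse z (!b)
    have : L = R.reverse := by rw [hR, List.reverse_reverse]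
    rw [this, hcontra]
    simp [Bool.not_not]
  have hnoadj : ∀ (i : ℕ) (z : β) (b : Bool),
      R[i]? = some (z, b) → R[i+1]? = some (z, !b) → False := by
    intro i z b h1 h2
    rw [List.getElem?_eq_some_iff] at h1 h2
    obtain ⟨hi1, hv1⟩ := h1
    obtain ⟨hi2, hv2⟩ := h2
    apply hnoadjR (R.take i) (R.drop (i+2)) z b
    conv_lhs => rw [← List.take_append_drop i R]
    rw [List.drop_eq_getElem_cons hi1, List.drop_eq_getElem_cons hi2, hv1, hv2]
  -- the partial maps
  set pf : β → Fin (k+1) → Option (Fin (k+1)) := fun z m =>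
    if h : m.1 < k ∧ R[m.1]? = some (z, true) then
      some ⟨m.1 + 1, Nat.succ_lt_succ h.1⟩
    else if h2 : 0 < m.1 ∧ R[m.1 - 1]? = some (z, false) then
      some ⟨m.1 - 1, Nat.lt_of_le_of_lt (Nat.sub_le m.1 1) m.isLt⟩
    else none
    with hpf
  have hchar : ∀ (z : β) (m t : Fin (k+1)), pf z m = some t →
      (m.1 < k ∧ R[m.1]? = some (z, true) ∧ t.1 = m.1 + 1) ∨
      (0 < m.1 ∧ R[m.1 - 1]? = some (z, false) ∧ t.1 = m.1 - 1) := by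
    intro z m t h
    rw [hpf] at h
    simp only at h
    split_ifs at h with h1 h2
    · exact Or.inl ⟨h1.1, h1.2, (congrArg Fin.val (Option.some.inj h)).symm⟩
    · exact Or.inr ⟨h2.1, h2.2, (congrArg Fin.val (Option.some.inj h)).symm⟩
  have hex : ∀ z : β, ∃ σz : Equiv.Perm (Fin (k+1)),
      ∀ m t, pf z m = some t → σz m = t := by
    intro z
    apply exists_perm_extend
    intro m m' t h1 h2
    rcases hchar z m t h1 with ⟨hm1, hm2, hm3⟩ | ⟨hm1, hm2, hm3⟩ <;>
      rcases hchar z m' t h2 with ⟨hn1, hn2, hn3⟩ | ⟨hn1, hn2, hn3⟩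
    · exact Fin.ext (by omega)
    · exfalso
      have e1 : m'.1 - 1 = m.1 + 1 := by omega
      rw [e1] at hn2
      exact hnoadj m.1 z true hm2 hn2
    · exfalso
      have e1 : m.1 - 1 = m'.1 + 1 := by omega
      rw [e1] at hm2
      exact hnoadj m'.1 z true hn2 hm2
    · exact Fin.ext (by omega)
  choose σ hσ using hex
  -- key evaluation facts
  have hE1 : ∀ (z : β) (r : ℕ) (hr : r < k), R[r]? = some (z, true) →
      σ z ⟨r, by omega⟩ = ⟨r + 1, by omega⟩ := by
    intro z r hr hrR
    apply hσ
    rw [hpf]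
    simp only
    split_ifs with h1 h2
    · rfl
    · exact absurd ⟨hr, hrR⟩ h1
    · exact absurd ⟨hr, hrR⟩ h1
  have hE2 : ∀ (z : β) (r : ℕ) (hr : r < k), R[r]? = some (z, false) →
      σ z ⟨r + 1, by omega⟩ = ⟨r, by omega⟩ := by
    intro z r hr hrR
    apply hσ
    rw [hpf]
    simp only
    split_ifs with h1 h2
    · exact absurd h1 (by rintro ⟨_, hb⟩; exact hnoadj r z false hrR hb)
    · rfl
    · exact absurd ⟨Nat.succ_pos r, hrR⟩ h2
  set ψ : FreeGroup β →* Equiv.Perm (Fin (k+1)) := FreeGroup.lift σ with hψ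
  have heval : ∀ (d : ℕ) (hd : d ≤ k),
      ((L.drop (k - d)).map (fun x => cond x.2 (σ x.1) (σ x.1)⁻¹)).prod ⟨0, Nat.succ_pos k⟩
        = ⟨d, Nat.lt_succ_of_le hd⟩ := by
    intro d
    induction d with
    | zero =>
        intro _
        have hdrop : L.drop (k - 0) = [] := by
          rw [Nat.sub_zero, hk]
          exact List.drop_length
        rw [hdrop]
        rfl
    | succ d ih =>
        intro hd
        have hjk : k - (d+1) < L.length := by omega
        have hj1 : k - (d+1) + 1 = k - d := by omega
        rw [List.drop_eq_getElem_cons hjk, hj1, List.map_cons, List.prod_cons,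
          Equiv.Perm.mul_apply, ih (by omega)]
        have hdR : d < R.length := hRlen ▸ (show d < k by omega)
        have hRd : R[d]? = some (L[k - (d+1)]'hjk) := by
          have hRd' := List.getElem_reverse (l := L) (i := d) hdR
          simp only [show L.length - 1 - d = k - (d+1) from by omega] at hRd'
          rw [List.getElem?_eq_getElem hdR, hRd']
        rcases hLj : (L[k - (d+1)]'hjk) with ⟨z, b⟩
        rw [hLj] at hRd
        cases b
        · show (σ z)⁻¹ ⟨d, _⟩ = ⟨d + 1, _⟩
          have := hE2 z d (by omega) hRd
          rw [← this]; exact (σ z).symm_apply_apply _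
        · show σ z ⟨d, _⟩ = ⟨d + 1, _⟩
          exact hE1 z d (by omega) hRd
  refine ⟨k, ψ, fun hcontra => ?_⟩
  have hmk : ψ g = (L.map fun x => cond x.2 (σ x.1) (σ x.1)⁻¹).prod := by
    conv_lhs => rw [← FreeGroup.mk_toWord (x := g)]
    exact FreeGroup.lift_mk
  have h0 := heval k le_rfl
  rw [Nat.sub_self, List.drop_zero, ← hmk, hcontra] at h0
  have h1 := congrArg Fin.val h0
  simp only [Equiv.Perm.one_apply] at h1
  exact hk0 (by omega)

/-! Part A : combinatorics -/

def code : Letter → Gen × Bool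
  | .a => (Gen.x, true)
  | .abar => (Gen.x, false)
  | .b => (Gen.y, true)
  | .bbar => (Gen.y, false)

def decode : Gen × Bool → Letter
  | (Gen.x, true) => .a
  | (Gen.x, false) => .abar
  | (Gen.y, true) => .b
  | (Gen.y, false) => .bbar

lemma decode_code (l : Letter) : decode (code l) = l := by cases l <;> rfl

lemma code_decode (p : Gen × Bool) : code (decode p) = p := by
  obtain ⟨g, b⟩ := p; cases g <;> cases b <;> rfl

lemma decode_bar (z : Gen) (b : Bool) : decode (z, !b) = (decode (z, b)).bar := by
  cases z <;> cases b <;> rfl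

lemma emb_of (l : Letter) : emb (FreeMonoid.of l) = FreeGroup.of l := rfl

lemma phi_of_mk (l : Letter) : phi (FreeGroup.of l) = FreeGroup.mk [code l] := by
  cases l <;>
    simp [phi, FreeGroup.lift_apply_of, code, FreeGroup.inv_mk, FreeGroup.invRev] <;> rfl

lemma phi_emb (w : M) : phi (emb w) = FreeGroup.mk ((FreeMonoid.toList w).map code) := by
  induction w using FreeMonoid.recOn with
  | one => simp [← FreeGroup.one_eq_mk]
  | of_mul l t iht =>
      rw [map_mul, map_mul, iht, emb_of, phi_of_mk, FreeGroup.mul_mk]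
      rfl

lemma phi_pair (l : Letter) :
    phi (emb (FreeMonoid.of l)) * phi (emb (FreeMonoid.of l.bar)) = 1 := by
  cases l <;> simp [emb_of, phi, FreeGroup.lift_apply_of, Letter.bar]

lemma twoDyck_phi {w : M} (h : TwoDyck w) : phi (emb w) = 1 := by
  induction h using Relation.ReflTransGen.head_induction_on with
  | refl => simp
  | head hstep _ ih =>
      obtain ⟨u, v, l⟩ := hstep
      simp only [map_mul] at ih ⊢
      rw [mul_assoc (phi (emb u)), phi_pair, mul_one]
      exact ih

lemma red_pull {L : List (Gen × Bool)} (hred : FreeGroup.Red L []) :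
    ∀ w : M, (FreeMonoid.toList w).map code = L → TwoDyck w := by
  induction hred using Relation.ReflTransGen.head_induction_on with
  | refl =>
      intro w hw
      have h1 : FreeMonoid.toList w = [] := by simpa using hw
      have h2 : w = 1 := FreeMonoid.toList.injective (by simpa using h1)
      rw [h2]
      exact Relation.ReflTransGen.refl
  | head hstep _ ih =>
      intro w hw
      obtain @⟨A, B, z, b⟩ := hstep
      set u : M := FreeMonoid.ofList (A.map decode) with hu
      set v : M := FreeMonoid.ofList (B.map decode) with hv
      set l : Letter := decode (z, b) with hl
      have hwl : FreeMonoid.toList w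
          = A.map decode ++ l :: l.bar :: B.map decode := by
        have := congrArg (List.map decode) hw
        simpa [List.map_map, Function.comp_def, decode_code, decode_bar] using this
      have hwEq : w = u * FreeMonoid.of l * FreeMonoid.of l.bar * v := by
        apply FreeMonoid.toList.injective
        simp [hwl, hu, hv, FreeMonoid.toList_mul, FreeMonoid.toList_of, FreeMonoid.toList_ofList]
      have h2 : (FreeMonoid.toList (u * v)).map code = A ++ B := by
        simp [hu, hv, FreeMonoid.toList_mul, FreeMonoid.toList_ofList, List.map_map,
          Function.comp_def, code_decode]
      exact Relation.ReflTransGen.head (hwEq ▸ PairDeletion.step u v l) (ih (u * v) h2)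

lemma phi_twoDyck {w : M} (h : phi (emb w) = 1) : TwoDyck w := by
  set L := (FreeMonoid.toList w).map code with hL
  have hmk : FreeGroup.mk L = 1 := by rw [← phi_emb]; exact h
  have hredL : FreeGroup.reduce L = [] := by
    have := FreeGroup.toWord_mk (L₁ := L)
    rw [hmk, FreeGroup.toWord_one] at this
    exact this.symm
  have hRed : FreeGroup.Red L [] := by
    have := FreeGroup.reduce.red (L := L)
    rwa [hredL] at this
  exact red_pull hRed w rfl

/-! Part B : the Good machinery -/

section GoodSec

variable (U : Subgroup F)

/-- `g` is approximable modulo `U` by a one-sided Dyck word. -/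
def Good (g : F) : Prop := ∃ w' : M, OneDyck w' ∧ g⁻¹ * emb w' ∈ U

variable [hUn : U.Normal] [hUf : U.FiniteIndex]

lemma good_one : Good U 1 := ⟨1, OneDyck.empty, by simpa using one_mem U⟩

lemma good_congr {g h : F} (hgh : g⁻¹ * h ∈ U) (hh : Good U h) : Good U g := by
  obtain ⟨w', hw', hmem⟩ := hh
  refine ⟨w', hw', ?_⟩
  have : g⁻¹ * emb w' = (g⁻¹ * h) * (h⁻¹ * emb w') := by group
  rw [this]; exact mul_mem hgh hmem

lemma good_mul {g h : F} (hg : Good U g) (hh : Good U h) : Good U (g * h) := by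
  obtain ⟨w', hw', hw⟩ := hg
  obtain ⟨v', hv', hv⟩ := hh
  refine ⟨w' * v', OneDyck.mul hw' hv', ?_⟩
  have : (g * h)⁻¹ * emb (w' * v')
      = (h⁻¹ * (g⁻¹ * emb w') * h) * (h⁻¹ * emb v') := by rw [map_mul]; group
  rw [this]
  exact mul_mem (hUn.conj_mem' _ hw h) hv

lemma good_pow {g : F} (hg : Good U g) : ∀ m : ℕ, Good U (g ^ m)
  | 0 => by rw [pow_zero]; exact good_one U
  | (m + 1) => by rw [pow_succ]; exact good_mul U (good_pow hg m) hg

/-- The master lemma: from the basic bracket pair `(t, s)` we get closure of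
`Good` under conjugation by `t`, `t⁻¹`, `s`, and the reversed pair `s * t`. -/
lemma good_family (t s : F) (h0 : Good U (t * s))
    (hbr : ∀ g, Good U g → Good U (t * g * s)) :
    (∀ g, Good U g → Good U (t * g * t⁻¹)) ∧
    (∀ g, Good U g → Good U (s * g * s⁻¹)) ∧
    Good U (s * t) := by
  set n := U.index with hn
  have hnpos : 0 < n := Nat.pos_of_ne_zero hUf.index_ne_zero
  obtain ⟨m, hm⟩ : ∃ m, n = m + 1 := ⟨n - 1, by omega⟩
  have hpow : ∀ x : F, x ^ n ∈ U := fun x => Subgroup.pow_index_mem U x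
  -- conjugation by t
  have conjT : ∀ g, Good U g → Good U (t * g * t⁻¹) := by
    intro g hg
    have hB : Good U ((t * g * s) * (t * s) ^ m) :=
      good_mul U (hbr g hg) (good_pow U h0 m)
    refine good_congr U ?_ hB
    have key : ∀ P : F, (t * g * t⁻¹)⁻¹ * ((t * g * s) * P) = (t * s) * P := by
      intro P; group
    rw [key, ← pow_succ', ← hm]
    exact hpow _
  -- conjugation by powers of t
  have conjTpow : ∀ (j : ℕ) (g : F), Good U g → Good U (t ^ j * g * (t ^ j)⁻¹) := by
    intro j
    induction j with
    | zero => intro g hg; simpa using hg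
    | succ i ih =>
        intro g hg
        have h1 := conjT _ (ih g hg)
        have e : t ^ (i + 1) * g * (t ^ (i + 1))⁻¹
            = t * (t ^ i * g * (t ^ i)⁻¹) * t⁻¹ := by
          rw [pow_succ']; group
        rw [e]; exact h1
  -- conjugation by t⁻¹
  have conjTinv : ∀ g, Good U g → Good U (t⁻¹ * g * t) := by
    intro g hg
    have hB : Good U (t ^ m * g * (t ^ m)⁻¹) := conjTpow m g hg
    have htm : (t : F) ^ m = t⁻¹ * t ^ n := by
      rw [hm, pow_succ', inv_mul_cancel_left]
    rw [htm] at hB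
    refine good_congr U ?_ hB
    have key : ∀ R : F, (t⁻¹ * g * t)⁻¹ * ((t⁻¹ * R) * g * (t⁻¹ * R)⁻¹)
        = (t⁻¹ * (g⁻¹ * R * g) * t) * (t⁻¹ * R⁻¹ * t) := by
      intro R; group
    rw [key]
    exact mul_mem (hUn.conj_mem' _ (hUn.conj_mem' _ (hpow t) g) t)
      (hUn.conj_mem' _ (inv_mem (hpow t)) t)
  -- conjugation by t*s
  have conjTS : ∀ g, Good U g → Good U ((t * s) * g * (t * s)⁻¹) := by
    intro g hg
    have hB : Good U ((t * s) * g * (t * s) ^ m) :=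
      good_mul U (good_mul U h0 hg) (good_pow U h0 m)
    refine good_congr U ?_ hB
    have key : ∀ P : F, ((t * s) * g * (t * s)⁻¹)⁻¹ * ((t * s) * g * P)
        = (t * s) * P := by intro P; group
    rw [key, ← pow_succ', ← hm]
    exact hpow _
  refine ⟨conjT, ?_, ?_⟩
  · intro g hg
    have h1 := conjTinv _ (conjTS g hg)
    have e : s * g * s⁻¹ = t⁻¹ * ((t * s) * g * (t * s)⁻¹) * t := by group
    rw [e]; exact h1
  · have h1 := conjTinv _ h0
    have e : s * t = t⁻¹ * (t * s) * t := by group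
    rw [e]; exact h1

end GoodSec

section GoodSec2

variable (U : Subgroup F) [hUn : U.Normal] [hUf : U.FiniteIndex]

local notation "Ta" => emb (FreeMonoid.of Letter.a)
local notation "Sa" => emb (FreeMonoid.of Letter.abar)
local notation "Tb" => emb (FreeMonoid.of Letter.b)
local notation "Sb" => emb (FreeMonoid.of Letter.bbar)

lemma good_TSa : Good U (Ta * Sa) := by
  refine ⟨FreeMonoid.of Letter.a * 1 * FreeMonoid.of Letter.abar,
    OneDyck.brA OneDyck.empty, ?_⟩
  simp only [map_mul, map_one]
  group
  exact one_mem U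

lemma good_TSb : Good U (Tb * Sb) := by
  refine ⟨FreeMonoid.of Letter.b * 1 * FreeMonoid.of Letter.bbar,
    OneDyck.brB OneDyck.empty, ?_⟩
  simp only [map_mul, map_one]
  group
  exact one_mem U

lemma good_brA : ∀ g, Good U g → Good U (Ta * g * Sa) := by
  intro g ⟨w', hw', hmem⟩
  refine ⟨FreeMonoid.of Letter.a * w' * FreeMonoid.of Letter.abar,
    OneDyck.brA hw', ?_⟩
  have : (Ta * g * Sa)⁻¹ * emb (FreeMonoid.of Letter.a * w' * FreeMonoid.of Letter.abar)
      = Sa⁻¹ * (g⁻¹ * emb w') * Sa := by simp only [map_mul]; group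
  rw [this]
  exact hUn.conj_mem' _ hmem _

lemma good_brB : ∀ g, Good U g → Good U (Tb * g * Sb) := by
  intro g ⟨w', hw', hmem⟩
  refine ⟨FreeMonoid.of Letter.b * w' * FreeMonoid.of Letter.bbar,
    OneDyck.brB hw', ?_⟩
  have : (Tb * g * Sb)⁻¹ * emb (FreeMonoid.of Letter.b * w' * FreeMonoid.of Letter.bbar)
      = Sb⁻¹ * (g⁻¹ * emb w') * Sb := by simp only [map_mul]; group
  rw [this]
  exact hUn.conj_mem' _ hmem _

lemma good_conj_letter (l : Letter) {g : F} (hg : Good U g) :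
    Good U (emb (FreeMonoid.of l) * g * (emb (FreeMonoid.of l))⁻¹) := by
  obtain ⟨cTa, cSa, _⟩ := good_family U Ta Sa (good_TSa U) (good_brA U)
  obtain ⟨cTb, cSb, _⟩ := good_family U Tb Sb (good_TSb U) (good_brB U)
  cases l
  · exact cTa g hg
  · exact cSa g hg
  · exact cTb g hg
  · exact cSb g hg

lemma good_conj_emb (u : M) {g : F} (hg : Good U g) :
    Good U (emb u * g * (emb u)⁻¹) := by
  induction u using FreeMonoid.recOn generalizing g with
  | one => simpa using hg
  | of_mul x xs ih =>
      have h1 := good_conj_letter U x (ih hg)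
      have e : emb (FreeMonoid.of x * xs) * g * (emb (FreeMonoid.of x * xs))⁻¹
          = emb (FreeMonoid.of x) * (emb xs * g * (emb xs)⁻¹) * (emb (FreeMonoid.of x))⁻¹ := by
        simp only [map_mul]; group
      rw [e]; exact h1

lemma good_pair (l : Letter) :
    Good U (emb (FreeMonoid.of l) * emb (FreeMonoid.of l.bar)) := by
  obtain ⟨_, _, hSTa⟩ := good_family U Ta Sa (good_TSa U) (good_brA U)
  obtain ⟨_, _, hSTb⟩ := good_family U Tb Sb (good_TSb U) (good_brB U)
  cases l
  · exact good_TSa U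
  · exact hSTa
  · exact good_TSb U
  · exact hSTb

lemma twoDyck_good {w : M} (h : TwoDyck w) : Good U (emb w) := by
  induction h using Relation.ReflTransGen.head_induction_on with
  | refl => simpa using good_one U
  | head hstep _ ih =>
      obtain ⟨u, v, l⟩ := hstep
      have hX := good_pair U l
      have hconj := good_conj_emb U u hX
      have hmul := good_mul U hconj ih
      have e : emb (u * FreeMonoid.of l * FreeMonoid.of l.bar * v)
          = (emb u * (emb (FreeMonoid.of l) * emb (FreeMonoid.of l.bar)) * (emb u)⁻¹)
            * emb (u * v) := by
        simp only [map_mul]; group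
      rw [e]; exact hmul
end GoodSec2

lemma onedyck_phi {w' : M} (h : OneDyck w') : phi (emb w') = 1 := by
  induction h with
  | empty => simp
  | mul _ _ ih1 ih2 => simp only [map_mul, ih1, ih2, one_mul]
  | brA _ ih =>
      simp only [map_mul, ih, mul_one]
      exact phi_pair Letter.a
  | brB _ ih =>
      simp only [map_mul, ih, mul_one]
      exact phi_pair Letter.b

/-- The closure of the one-sided Dyck language `D'₂*` in `M`, in the topology
induced from the profinite topology on `F`, is exactly the two-sided Dyck
language `D₂*`. -/
theorem closure_oneDyck_eq_twoDyck (w : M) :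
    (∀ U : Subgroup F, U.Normal → U.FiniteIndex →
        ∃ w' : M, OneDyck w' ∧ (emb w)⁻¹ * emb w' ∈ U) ↔ TwoDyck w := by
  constructor
  · intro H
    apply phi_twoDyck
    by_contra hne
    obtain ⟨n, ψ, hψ⟩ := freeGroup_sep (phi (emb w)) hne
    set U : Subgroup F := (ψ.comp phi).ker with hU
    have hUn : U.Normal := MonoidHom.normal_ker _
    have hUf : U.FiniteIndex := Subgroup.finiteIndex_ker _
    obtain ⟨w', hw', hmem⟩ := H U hUn hUf
    have h1 : phi (emb w') = 1 := onedyck_phi hw'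
    have h2 : emb w' ∈ U := by
      rw [hU, MonoidHom.mem_ker, MonoidHom.comp_apply, h1, map_one]
    have h3 : (emb w)⁻¹ ∈ U := by
      have := mul_mem hmem (inv_mem h2)
      simpa using this
    apply hψ
    have h4 := inv_mem h3
    rw [inv_inv] at h4
    rwa [hU, MonoidHom.mem_ker, MonoidHom.comp_apply] at h4
  · intro h U hUn hUf
    haveI := hUn; haveI := hUf
    exact twoDyck_good U h
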